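/- Let B be a unital complex *-algebra, let n ≥ 1, and let u^{kl}_{ij} ∈ B for 1 ≤ i, j, k, l ≤ n. Let λ : M_n(ℂ) → B ⊗ M_n(ℂ) be the linear map determined by λ(e_{ij}) = Σ_{k,l=1}^n u^{kl}_{ij} ⊗ e_{kl}. Then λ is a unital *-algebra homomorphism satisfying (id ⊗ τ)(λ(x)) = τ(x)·1_B for all x ∈ M_n(ℂ) if and only if the following relations hold for all indices: Σ_{p=1}^n u^{kp}_{ij} u^{pl}_{rs} = δ_{jr} u^{kl}_{is}, (u^{kl}_{ij})* = u^{lk}_{ji}, Σ_{p=1}^n u^{kl}_{pp} = δ_{kl}, and Σ_{p=1}^n u^{pp}_{kl} = δ_{kl}. -/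

import Mathlib

open scoped TensorProduct

/-- The normalized trace `τ(x) = (1/n) · tr(x)` on `n × n` complex matrices. -/
noncomputable def normalizedTrace (n : ℕ) : Matrix (Fin n) (Fin n) ℂ →ₗ[ℂ] ℂ :=
  ((n : ℂ)⁻¹) • Matrix.traceLinearMap (Fin n) ℂ ℂ

noncomputable def entryLM (n : ℕ) (k l : Fin n) : Matrix (Fin n) (Fin n) ℂ →ₗ[ℂ] ℂ where
  toFun x := x k l
  map_add' _ _ := rfl
  map_smul' _ _ := rfl

noncomputable def coeffLM {B : Type*} [AddCommGroup B] [Module ℂ B] (n : ℕ) (k l : Fin n) :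
    B ⊗[ℂ] Matrix (Fin n) (Fin n) ℂ →ₗ[ℂ] B :=
  (TensorProduct.rid ℂ B).toLinearMap ∘ₗ
    TensorProduct.map (LinearMap.id : B →ₗ[ℂ] B) (entryLM n k l)

lemma coeffLM_tmul {B : Type*} [AddCommGroup B] [Module ℂ B] (n : ℕ) (k l : Fin n)
    (b : B) (m : Matrix (Fin n) (Fin n) ℂ) :
    coeffLM n k l (b ⊗ₜ[ℂ] m) = m k l • b := by
  simp [coeffLM, entryLM]
  rfl

lemma coeffLM_sum {B : Type*} [AddCommGroup B] [Module ℂ B] (n : ℕ) (k l : Fin n)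
    (a : Fin n → Fin n → B) :
    coeffLM n k l (∑ p : Fin n, ∑ q : Fin n, a p q ⊗ₜ[ℂ] Matrix.single p q (1:ℂ))
      = a k l := by
  rw [map_sum]
  simp only [map_sum, coeffLM_tmul, Matrix.single, Matrix.of_apply]
  simp [ite_smul, Finset.sum_ite_eq, ite_and]

lemma tmul_basis_ext {B : Type*} [AddCommGroup B] [Module ℂ B] {n : ℕ}
    {a b : Fin n → Fin n → B}
    (h : (∑ p : Fin n, ∑ q : Fin n, a p q ⊗ₜ[ℂ] Matrix.single p q (1:ℂ))
       = ∑ p : Fin n, ∑ q : Fin n, b p q ⊗ₜ[ℂ] Matrix.single p q (1:ℂ))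
    (k l : Fin n) : a k l = b k l := by
  have := congrArg (coeffLM n k l) h
  rwa [coeffLM_sum, coeffLM_sum] at this

lemma matrix_decomp {n : ℕ} (x : Matrix (Fin n) (Fin n) ℂ) :
    x = ∑ i : Fin n, ∑ j : Fin n, x i j • Matrix.single i j (1:ℂ) := by
  conv_lhs => rw [Matrix.matrix_eq_sum_single x]
  simp [Matrix.smul_single]

lemma one_eq_sum {n : ℕ} :
    (1 : Matrix (Fin n) (Fin n) ℂ) = ∑ p : Fin n, Matrix.single p p (1:ℂ) := by
  ext i j
  rw [Matrix.sum_apply]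
  simp only [Matrix.single, Matrix.of_apply, ite_and]
  rw [Finset.sum_ite_eq' Finset.univ i (fun p => if p = j then (1:ℂ) else 0)]
  simp [Matrix.one_apply, eq_comm]

lemma star_stdBasis {n : ℕ} (i j : Fin n) :
    star (Matrix.single i j (1:ℂ)) = Matrix.single j i (1:ℂ) := by
  ext a b
  simp [Matrix.star_apply, Matrix.single, and_comm]

lemma tmul_ite' {B : Type*} [AddCommGroup B] [Module ℂ B] {n : ℕ}
    (b : B) (c : Prop) [Decidable c] (m : Matrix (Fin n) (Fin n) ℂ) :
    b ⊗ₜ[ℂ] (if c then m else 0) = if c then b ⊗ₜ[ℂ] m else 0 := by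
  split <;> simp

lemma ite_tmul' {B : Type*} [AddCommGroup B] [Module ℂ B] {n : ℕ}
    (b : B) (c : Prop) [Decidable c] (m : Matrix (Fin n) (Fin n) ℂ) :
    (if c then b else 0) ⊗ₜ[ℂ] m = if c then b ⊗ₜ[ℂ] m else 0 := by
  split <;> simp

lemma ntrace_stdBasis (n : ℕ) (k l : Fin n) :
    normalizedTrace n (Matrix.single k l (1:ℂ))
      = (n : ℂ)⁻¹ * (if k = l then 1 else 0) := by
  simp only [normalizedTrace, LinearMap.smul_apply, Matrix.traceLinearMap_apply,
    Matrix.trace, Matrix.diag, Matrix.single, Matrix.of_apply, ite_and, smul_eq_mul]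
  congr 1
  rw [Finset.sum_ite_eq Finset.univ k (fun p => if l = p then (1:ℂ) else 0)]
  simp [eq_comm]


set_option maxHeartbeats 1600000 in
/-- For elements `u^{kl}_{ij}` of a unital complex *-algebra `B`, the linear
map `λ : M_n(ℂ) → B ⊗ M_n(ℂ)` determined by `λ(e_ij) = Σ_{k,l} u^{kl}_{ij} ⊗ e_kl` is a
unital *-algebra homomorphism preserving the normalized trace (`(id ⊗ τ)(λ(x)) = τ(x)·1_B`)
if and only if the defining relations of Wang's quantum automorphism group hold.
Here `u k l i j` denotes `u^{kl}_{ij}`, and the *-structure on the tensor product is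
determined by `(b ⊗ m)* = b* ⊗ m*`. -/
theorem quantum_automorphism_relations_iff {B : Type*} [Ring B] [Algebra ℂ B]
    [StarRing B] [StarModule ℂ B] (n : ℕ) (hn : 1 ≤ n)
    (u : Fin n → Fin n → Fin n → Fin n → B)
    [StarRing (B ⊗[ℂ] Matrix (Fin n) (Fin n) ℂ)]
    (hstar : ∀ (b : B) (m : Matrix (Fin n) (Fin n) ℂ),
      star (b ⊗ₜ[ℂ] m) = star b ⊗ₜ[ℂ] star m)
    (lam : Matrix (Fin n) (Fin n) ℂ →ₗ[ℂ] B ⊗[ℂ] Matrix (Fin n) (Fin n) ℂ)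
    (hlam : ∀ i j : Fin n, lam (Matrix.single i j 1) =
      ∑ k : Fin n, ∑ l : Fin n, u k l i j ⊗ₜ[ℂ] Matrix.single k l 1) :
    ((∀ x y : Matrix (Fin n) (Fin n) ℂ, lam (x * y) = lam x * lam y) ∧
     lam 1 = 1 ∧
     (∀ x : Matrix (Fin n) (Fin n) ℂ, lam (star x) = star (lam x)) ∧
     (∀ x : Matrix (Fin n) (Fin n) ℂ,
       TensorProduct.rid ℂ B
         (TensorProduct.map (LinearMap.id : B →ₗ[ℂ] B) (normalizedTrace n) (lam x)) =
       algebraMap ℂ B (normalizedTrace n x)))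
    ↔
    ((∀ i j k l r s : Fin n,
        ∑ p : Fin n, u k p i j * u p l r s = if j = r then u k l i s else 0) ∧
     (∀ i j k l : Fin n, star (u k l i j) = u l k j i) ∧
     (∀ k l : Fin n, ∑ p : Fin n, u k l p p = if k = l then 1 else 0) ∧
     (∀ k l : Fin n, ∑ p : Fin n, u p p k l = if k = l then 1 else 0)) := by
  classical
  have hnz : (n : ℂ)⁻¹ ≠ 0 := inv_ne_zero (Nat.cast_ne_zero.mpr (by omega))
  -- product of basis matrices
  have hEmul : ∀ k p q l : Fin n, Matrix.single k p (1:ℂ) * Matrix.single q l 1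
      = if p = q then Matrix.single k l 1 else 0 := by
    intro k p q l
    by_cases h : p = q
    · subst h; simp
    · rw [Matrix.single_mul_single_of_ne (h := h), if_neg h]
  -- product of images of basis matrices
  have hprod : ∀ i j r s : Fin n,
      lam (Matrix.single i j 1) * lam (Matrix.single r s 1)
      = ∑ k : Fin n, ∑ l : Fin n,
          (∑ p : Fin n, u k p i j * u p l r s) ⊗ₜ[ℂ] Matrix.single k l 1 := by
    intro i j r s
    rw [hlam, hlam, Fintype.sum_mul_sum]
    refine Finset.sum_congr rfl fun k _ => ?_
    calc (∑ q : Fin n, (∑ p : Fin n, u k p i j ⊗ₜ[ℂ] Matrix.single k p (1:ℂ)) *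
            (∑ l : Fin n, u q l r s ⊗ₜ[ℂ] Matrix.single q l (1:ℂ)))
        = ∑ q : Fin n, ∑ p : Fin n, ∑ l : Fin n,
            (u k p i j ⊗ₜ[ℂ] Matrix.single k p (1:ℂ)) *
            (u q l r s ⊗ₜ[ℂ] Matrix.single q l (1:ℂ)) := by
          exact Finset.sum_congr rfl fun q _ => Fintype.sum_mul_sum _ _
      _ = ∑ q : Fin n, ∑ p : Fin n, ∑ l : Fin n,
            (if p = q then (u k p i j * u q l r s) ⊗ₜ[ℂ] Matrix.single k l (1:ℂ)
             else 0) := by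
          simp only [Algebra.TensorProduct.tmul_mul_tmul, hEmul, tmul_ite']
      _ = ∑ p : Fin n, ∑ q : Fin n, ∑ l : Fin n,
            (if p = q then (u k p i j * u q l r s) ⊗ₜ[ℂ] Matrix.single k l (1:ℂ)
             else 0) := Finset.sum_comm
      _ = ∑ p : Fin n, ∑ l : Fin n, ∑ q : Fin n,
            (if p = q then (u k p i j * u q l r s) ⊗ₜ[ℂ] Matrix.single k l (1:ℂ)
             else 0) := Finset.sum_congr rfl fun p _ => Finset.sum_comm
      _ = ∑ p : Fin n, ∑ l : Fin n,
            (u k p i j * u p l r s) ⊗ₜ[ℂ] Matrix.single k l (1:ℂ) := by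
          refine Finset.sum_congr rfl fun p _ => Finset.sum_congr rfl fun l _ => ?_
          rw [Finset.sum_ite_eq Finset.univ p
            (fun q => (u k p i j * u q l r s) ⊗ₜ[ℂ] Matrix.single k l (1:ℂ))]
          simp
      _ = ∑ l : Fin n, ∑ p : Fin n,
            (u k p i j * u p l r s) ⊗ₜ[ℂ] Matrix.single k l (1:ℂ) := Finset.sum_comm
      _ = _ := by simp [TensorProduct.sum_tmul]
  -- star of images of basis matrices
  have hstarlam : ∀ i j : Fin n, star (lam (Matrix.single i j 1))
      = ∑ k : Fin n, ∑ l : Fin n, star (u l k i j) ⊗ₜ[ℂ] Matrix.single k l 1 := by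
    intro i j
    rw [hlam]
    rw [star_sum]
    simp only [star_sum, hstar, star_stdBasis]
    exact Finset.sum_comm
  -- image of 1
  have hone' : lam 1 = ∑ k : Fin n, ∑ l : Fin n,
      (∑ p : Fin n, u k l p p) ⊗ₜ[ℂ] Matrix.single k l 1 := by
    conv_lhs => rw [one_eq_sum, map_sum]
    simp only [hlam]
    rw [Finset.sum_comm]
    refine Finset.sum_congr rfl fun k _ => ?_
    rw [Finset.sum_comm]
    simp [TensorProduct.sum_tmul]
  have honeRHS : (1 : B ⊗[ℂ] Matrix (Fin n) (Fin n) ℂ) = ∑ k : Fin n, ∑ l : Fin n,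
      (if k = l then (1:B) else 0) ⊗ₜ[ℂ] Matrix.single k l 1 := by
    rw [Algebra.TensorProduct.one_def]
    conv_lhs => rw [one_eq_sum (n := n), TensorProduct.tmul_sum]
    simp [ite_tmul', Finset.sum_ite_eq]
  -- trace of images of basis matrices
  have htrlam : ∀ i j : Fin n,
      TensorProduct.rid ℂ B (TensorProduct.map (LinearMap.id : B →ₗ[ℂ] B)
        (normalizedTrace n) (lam (Matrix.single i j 1)))
      = ((n:ℂ)⁻¹ • ∑ p : Fin n, u p p i j) := by
    intro i j
    rw [hlam, map_sum, map_sum]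
    simp only [map_sum, TensorProduct.map_tmul, TensorProduct.rid_tmul, LinearMap.id_coe,
      id_eq, ntrace_stdBasis, Finset.smul_sum]
    simp [mul_ite, mul_one, mul_zero, ite_smul, zero_smul, Finset.sum_ite_eq]
  have cancel : ∀ a b : B, (n:ℂ)⁻¹ • a = (n:ℂ)⁻¹ • b → a = b := by
    intro a b hab
    have h4 := congrArg (fun z => (n:ℂ) • z) hab
    have hn0 : (n:ℂ) ≠ 0 := Nat.cast_ne_zero.mpr (by omega)
    simpa [smul_smul, mul_inv_cancel₀ hn0] using h4
  constructor
  · rintro ⟨hm, h1, hs, ht⟩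
    refine ⟨?_, ?_, ?_, ?_⟩
    · intro i j k l r s
      have h2 := hm (Matrix.single i j 1) (Matrix.single r s 1)
      rw [hprod, hEmul] at h2
      have hL : lam (if j = r then Matrix.single i s (1:ℂ) else 0)
          = ∑ k : Fin n, ∑ l : Fin n,
              (if j = r then u k l i s else 0) ⊗ₜ[ℂ] Matrix.single k l 1 := by
        by_cases h : j = r
        · simp [h, hlam]
        · simp [h]
      rw [hL] at h2
      exact (tmul_basis_ext h2 k l).symm
    · intro i j k l
      have h2 := hs (Matrix.single i j 1)
      rw [star_stdBasis, hlam, hstarlam] at h2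
      exact (tmul_basis_ext h2 l k).symm
    · intro k l
      have h2 : (∑ k : Fin n, ∑ l : Fin n,
            (∑ p : Fin n, u k l p p) ⊗ₜ[ℂ] Matrix.single k l (1:ℂ))
          = ∑ k : Fin n, ∑ l : Fin n,
            (if k = l then (1:B) else 0) ⊗ₜ[ℂ] Matrix.single k l 1 :=
        hone'.symm.trans (h1.trans honeRHS)
      exact tmul_basis_ext h2 k l
    · intro k l
      have h2 := ht (Matrix.single k l 1)
      rw [htrlam, ntrace_stdBasis, map_mul] at h2
      have h3 : ((n:ℂ)⁻¹ • ∑ p : Fin n, u p p k l) = (n:ℂ)⁻¹ • (if k = l then (1:B) else 0) := by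
        rw [h2, ← Algebra.smul_def]
        congr 1
        simp [apply_ite (algebraMap ℂ B)]
      exact cancel _ _ h3
  · rintro ⟨r1, r2, r3, r4⟩
    have bm : ∀ i j r s : Fin n,
        lam (Matrix.single i j 1 * Matrix.single r s 1)
        = lam (Matrix.single i j 1) * lam (Matrix.single r s 1) := by
      intro i j r s
      rw [hprod, hEmul]
      simp only [r1]
      by_cases h : j = r
      · simp [h, hlam]
      · simp [h]
    have hsmulstar : ∀ (c : ℂ) (i j : Fin n),
        star (c • lam (Matrix.single i j 1))
        = star c • star (lam (Matrix.single i j 1)) := by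
      intro c i j
      rw [hlam]
      simp only [Finset.smul_sum, TensorProduct.smul_tmul', star_sum, hstar, star_smul]
    have hbs : ∀ i j : Fin n, lam (star (Matrix.single i j (1:ℂ)))
        = star (lam (Matrix.single i j 1)) := by
      intro i j
      rw [star_stdBasis, hlam, hstarlam]
      exact Finset.sum_congr rfl fun k _ => Finset.sum_congr rfl fun l _ => by rw [r2]
    refine ⟨?_, ?_, ?_, ?_⟩
    · intro x y
      conv_lhs => rw [matrix_decomp x, matrix_decomp y]
      conv_rhs => rw [matrix_decomp x, matrix_decomp y]
      simp only [Finset.sum_mul, Finset.mul_sum, map_sum, smul_mul_assoc, mul_smul_comm,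
        map_smul, bm]
    · rw [hone', honeRHS]
      exact Finset.sum_congr rfl fun k _ => Finset.sum_congr rfl fun l _ => by rw [r3]
    · intro x
      conv_lhs => rw [matrix_decomp x]
      conv_rhs => rw [matrix_decomp x]
      simp only [star_sum, star_smul, star_stdBasis, map_sum, map_smul, hsmulstar, ← hbs]
    · intro x
      conv_lhs => rw [matrix_decomp x]
      conv_rhs => rw [matrix_decomp x]
      simp only [map_sum, map_smul, htrlam, ntrace_stdBasis, r4, smul_eq_mul,
        Algebra.algebraMap_eq_smul_one, smul_smul]
      simp [mul_ite, mul_one, mul_zero, ite_smul, zero_smul, smul_ite, smul_zero, smul_smul]
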